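/- Tail estimate against a mean-zero bump in the non-homogeneous setting. Let μ be a Borel measure on ℝ^N satisfying μ(B(x,r)) ≤ r^d for all balls, let K be a d-dimensional Calderón–Zygmund kernel with exponent α > 0, and let b₁, b₂ be measurable with ‖b₁‖_{L^∞(μ)} ≤ 1 and ‖b₂‖_{L^∞(μ)} ≤ 1. Let Q be an axis-parallel cube, let φ ∈ L¹(μ) be supported in Q with ∫ b₁ φ dμ = 0, and let A ⊆ ℝ^N be a measurable set with dist(A,Q) ≥ ℓ(Q) > 0. Then the double integral converges absolutely and |∫_A ∫_Q b₂(x) K(x,y) b₁(y) φ(y) dμ(y) dμ(x)| ≤ C (ℓ(Q)/dist(A,Q))^α ‖φ‖_{L¹(μ)}, where C depends only on N, d and α. -/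

import Mathlib

open MeasureTheory ENNReal

noncomputable section

/-- Euclidean space `ℝ^N`. -/
abbrev RN (N : ℕ) := EuclideanSpace ℝ (Fin N)

/-- The axis-parallel (half-open) cube with centre `c` and side-length `l`. -/
def cube {N : ℕ} (c : RN N) (l : ℝ) : Set (RN N) :=
  {x | ∀ i, c i - l / 2 ≤ x i ∧ x i < c i + l / 2}

/-- `μ(B(x,r)) ≤ r^d` for all balls. -/
def HasGrowth {N : ℕ} (μ : Measure (RN N)) (d : ℝ) : Prop :=
  ∀ (x : RN N) (r : ℝ), 0 < r → μ (Metric.ball x r) ≤ ENNReal.ofReal (r ^ d)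

/-- A `d`-dimensional Calderón–Zygmund kernel with exponent `α`. -/
structure IsCZKernel {N : ℕ} (d α : ℝ) (K : RN N → RN N → ℂ) : Prop where
  meas : Measurable (Function.uncurry K)
  bound : ∀ x y : RN N, x ≠ y → ‖K x y‖ ≤ dist x y ^ (-d)
  smooth : ∀ x x' y : RN N, 0 < dist x x' → 2 * dist x x' < dist x y →
    ‖K x y - K x' y‖ + ‖K y x - K y x'‖ ≤ dist x x' ^ α / dist x y ^ (d + α)


/-- The (Euclidean) distance between two sets. -/
def sDist {N : ℕ} (s t : Set (RN N)) : ℝ :=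
  sInf {r | ∃ x ∈ s, ∃ y ∈ t, r = dist x y}

lemma center_mem_cube {N : ℕ} (c : RN N) {l : ℝ} (hl : 0 < l) : c ∈ cube c l :=
  fun i => by constructor <;> [linarith; linarith]

lemma dist_le_of_mem_cube {N : ℕ} {c : RN N} {l : ℝ} (hl : 0 ≤ l) {y : RN N}
    (hy : y ∈ cube c l) : dist y c ≤ Real.sqrt N * l / 2 := by
  have h1 : dist y c = Real.sqrt (∑ i, dist (y i) (c i) ^ 2) := EuclideanSpace.dist_eq y c
  have h2 : ∑ i, dist (y i) (c i) ^ 2 ≤ (N : ℝ) * (l / 2) ^ 2 := by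
    calc ∑ i, dist (y i) (c i) ^ 2 ≤ ∑ _i : Fin N, (l / 2) ^ 2 := by
          refine Finset.sum_le_sum fun i _ => ?_
          have h3 : dist (y i) (c i) ≤ l / 2 := by
            rw [Real.dist_eq, abs_le]
            obtain ⟨ha, hb⟩ := hy i
            constructor <;> linarith
          exact pow_le_pow_left₀ dist_nonneg h3 2
      _ = (N : ℝ) * (l / 2) ^ 2 := by simp [Finset.card_univ, mul_comm]
  calc dist y c ≤ Real.sqrt ((N : ℝ) * (l / 2) ^ 2) := by rw [h1]; exact Real.sqrt_le_sqrt h2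
    _ = Real.sqrt N * l / 2 := by
        rw [Real.sqrt_mul (by positivity), Real.sqrt_sq (by positivity)]; ring

lemma tail_lintegral {N : ℕ} {μ : Measure (RN N)} {d α D : ℝ} (hμ : HasGrowth μ d)
    (hd : 0 < d) (hα : 0 < α) (hD : 0 < D) (c : RN N) :
    ∫⁻ x, ENNReal.ofReal ((D + dist x c) ^ (-(d + α))) ∂μ ≤
      ENNReal.ofReal ((2:ℝ) ^ d * (1 - (2:ℝ) ^ (-α))⁻¹ * D ^ (-α)) := by
  classical
  set s := d + α with hs
  set T : ℕ → Set (RN N) :=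
    fun k => (fun x => D + dist x c) ⁻¹' Set.Ico ((2:ℝ) ^ k * D) ((2:ℝ) ^ (k + 1) * D) with hT
  have hdm : Measurable fun x : RN N => D + dist x c :=
    measurable_const.add (measurable_id.dist measurable_const)
  have hTm : ∀ k, MeasurableSet (T k) := fun k => hdm measurableSet_Ico
  have hpt : ∀ x : RN N, ENNReal.ofReal ((D + dist x c) ^ (-s)) ≤
      ∑' k : ℕ, (T k).indicator (fun _ => ENNReal.ofReal (((2:ℝ) ^ k * D) ^ (-s))) x := by
    intro x
    set ρ := D + dist x c with hρ
    have hρD : D ≤ ρ := le_add_of_nonneg_right dist_nonneg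
    have hρ0 : 0 < ρ := lt_of_lt_of_le hD hρD
    have hex : ∃ k : ℕ, ρ < (2:ℝ) ^ (k + 1) * D := by
      obtain ⟨n, hn⟩ := pow_unbounded_of_one_lt (ρ / D) one_lt_two
      refine ⟨n, ?_⟩
      rw [div_lt_iff₀ hD] at hn
      have h2 : (2:ℝ) ^ n ≤ (2:ℝ) ^ (n + 1) := pow_le_pow_right₀ one_le_two (Nat.le_succ n)
      nlinarith
    set k := Nat.find hex with hk
    have hk2 : ρ < (2:ℝ) ^ (k + 1) * D := Nat.find_spec hex
    have hk1 : (2:ℝ) ^ k * D ≤ ρ := by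
      rcases Nat.eq_zero_or_pos k with h0 | h0
      · rw [h0]; simpa using hρD
      · have := Nat.find_min hex (m := k - 1) (by omega)
        push_neg at this
        have hkk : k - 1 + 1 = k := by omega
        rwa [hkk] at this
    have hmem : x ∈ T k := ⟨hk1, hk2⟩
    calc ENNReal.ofReal (ρ ^ (-s)) ≤
          (T k).indicator (fun _ => ENNReal.ofReal (((2:ℝ) ^ k * D) ^ (-s))) x := by
          rw [Set.indicator_of_mem hmem]
          exact ENNReal.ofReal_le_ofReal
            (Real.rpow_le_rpow_of_nonpos (by positivity) hk1 (neg_nonpos.mpr (by rw [hs]; positivity)))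
      _ ≤ _ := ENNReal.le_tsum k
  have hterm : ∀ k : ℕ,
      (∫⁻ x, (T k).indicator (fun _ => ENNReal.ofReal (((2:ℝ) ^ k * D) ^ (-s))) x ∂μ) ≤
        ENNReal.ofReal ((2:ℝ) ^ d * D ^ (-α)) * (ENNReal.ofReal ((2:ℝ) ^ (-α))) ^ k := by
    intro k
    rw [lintegral_indicator (hTm k), setLIntegral_const]
    have hsub : T k ⊆ Metric.ball c ((2:ℝ) ^ (k + 1) * D) := by
      intro x hx
      simp only [hT, Set.mem_preimage, Set.mem_Ico] at hx
      simp only [Metric.mem_ball]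
      linarith [hx.2, hD]
    have hμT : μ (T k) ≤ ENNReal.ofReal (((2:ℝ) ^ (k + 1) * D) ^ d) :=
      (measure_mono hsub).trans (hμ c _ (by positivity))
    calc ENNReal.ofReal (((2:ℝ) ^ k * D) ^ (-s)) * μ (T k) ≤
          ENNReal.ofReal (((2:ℝ) ^ k * D) ^ (-s)) * ENNReal.ofReal (((2:ℝ) ^ (k + 1) * D) ^ d) :=
          mul_le_mul_right hμT _
      _ = ENNReal.ofReal (((2:ℝ) ^ k * D) ^ (-s) * ((2:ℝ) ^ (k + 1) * D) ^ d) :=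
          (ENNReal.ofReal_mul (by positivity)).symm
      _ = ENNReal.ofReal ((2:ℝ) ^ d * D ^ (-α)) * (ENNReal.ofReal ((2:ℝ) ^ (-α))) ^ k := by
          rw [← ENNReal.ofReal_pow (by positivity), ← ENNReal.ofReal_mul (by positivity)]
          congr 1
          have e1 : ((2:ℝ) ^ k * D) ^ (-s) = ((2:ℝ) ^ k) ^ (-s) * D ^ (-s) :=
            Real.mul_rpow (by positivity) hD.le
          have e2 : ((2:ℝ) ^ (k + 1) * D) ^ d = ((2:ℝ) ^ k) ^ d * (2:ℝ) ^ d * D ^ d := by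
            rw [pow_succ, show (2:ℝ) ^ k * 2 * D = ((2:ℝ)^k) * (2 * D) by ring,
              Real.mul_rpow (by positivity) (by positivity),
              Real.mul_rpow (by norm_num) hD.le]
            ring
          have e3 : ((2:ℝ) ^ (-α)) ^ k = ((2:ℝ) ^ k) ^ (-α) := by
            rw [← Real.rpow_natCast ((2:ℝ) ^ (-α)) k, ← Real.rpow_natCast (2:ℝ) k,
              ← Real.rpow_mul (by norm_num), ← Real.rpow_mul (by norm_num)]
            ring_nf
          rw [e1, e2, e3]
          have e4 : ((2:ℝ) ^ k) ^ (-s) * ((2:ℝ) ^ k) ^ d = ((2:ℝ) ^ k) ^ (-α) := by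
            rw [← Real.rpow_add (by positivity)]; congr 1; rw [hs]; ring
          have e5 : D ^ (-s) * D ^ d = D ^ (-α) := by
            rw [← Real.rpow_add hD]; congr 1; rw [hs]; ring
          calc ((2:ℝ) ^ k) ^ (-s) * D ^ (-s) * (((2:ℝ) ^ k) ^ d * (2:ℝ) ^ d * D ^ d)
              = (((2:ℝ) ^ k) ^ (-s) * ((2:ℝ) ^ k) ^ d) * (D ^ (-s) * D ^ d) * (2:ℝ) ^ d := by ring
            _ = (2:ℝ) ^ d * D ^ (-α) * ((2:ℝ) ^ k) ^ (-α) := by rw [e4, e5]; ring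
  have h2α : (2:ℝ) ^ (-α) < 1 :=
    Real.rpow_lt_one_of_one_lt_of_neg one_lt_two (by linarith)
  calc ∫⁻ x, ENNReal.ofReal ((D + dist x c) ^ (-s)) ∂μ
      ≤ ∫⁻ x, ∑' k : ℕ, (T k).indicator
          (fun _ => ENNReal.ofReal (((2:ℝ) ^ k * D) ^ (-s))) x ∂μ := lintegral_mono hpt
    _ = ∑' k : ℕ, ∫⁻ x, (T k).indicator
          (fun _ => ENNReal.ofReal (((2:ℝ) ^ k * D) ^ (-s))) x ∂μ :=
        lintegral_tsum fun k => ((measurable_const.indicator (hTm k))).aemeasurable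
    _ ≤ ∑' k : ℕ, ENNReal.ofReal ((2:ℝ) ^ d * D ^ (-α)) * (ENNReal.ofReal ((2:ℝ) ^ (-α))) ^ k :=
        ENNReal.tsum_le_tsum hterm
    _ = ENNReal.ofReal ((2:ℝ) ^ d * D ^ (-α)) * (1 - ENNReal.ofReal ((2:ℝ) ^ (-α)))⁻¹ := by
        rw [ENNReal.tsum_mul_left, ENNReal.tsum_geometric]
    _ = ENNReal.ofReal ((2:ℝ) ^ d * (1 - (2:ℝ) ^ (-α))⁻¹ * D ^ (-α)) := by
        rw [show (1 : ℝ≥0∞) - ENNReal.ofReal ((2:ℝ) ^ (-α)) = ENNReal.ofReal (1 - (2:ℝ) ^ (-α)) by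
            rw [ENNReal.ofReal_sub _ (by positivity), ENNReal.ofReal_one],
          ← ENNReal.ofReal_inv_of_pos (by linarith), ← ENNReal.ofReal_mul (by positivity)]
        congr 1
        ring

/-- **Tail estimate against a mean-zero bump in the non-homogeneous setting.** -/
theorem tail_estimate_mean_zero_bump
    (N : ℕ) (hN : 0 < N) (d α : ℝ) (hd0 : 0 < d) (hdN : d ≤ N) (hα : 0 < α) :
    ∃ C : ℝ, ∀ (μ : Measure (RN N)) (K : RN N → RN N → ℂ) (b₁ b₂ : RN N → ℂ),
      HasGrowth μ d → IsCZKernel d α K →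
      Measurable b₁ → (∀ᵐ x ∂μ, ‖b₁ x‖ ≤ 1) →
      Measurable b₂ → (∀ᵐ x ∂μ, ‖b₂ x‖ ≤ 1) →
      ∀ (cQ : RN N) (lQ : ℝ) (A : Set (RN N)), MeasurableSet A →
        0 < lQ → lQ ≤ sDist A (cube cQ lQ) →
      ∀ φ : RN N → ℂ,
        Integrable φ μ → (∀ x, x ∉ cube cQ lQ → φ x = 0) →
        (∫ x, b₁ x * φ x ∂μ) = 0 →
        -- absolute convergence of the double integral
        ((∀ x ∈ A, Integrable (fun y => K x y * b₁ y * φ y) μ) ∧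
          IntegrableOn (fun x => b₂ x * ∫ y, K x y * b₁ y * φ y ∂μ) A μ ∧
          -- the tail estimate
          ‖∫ x in A, b₂ x * ∫ y, K x y * b₁ y * φ y ∂μ ∂μ‖ ≤
            C * (lQ / sDist A (cube cQ lQ)) ^ α * ∫ x, ‖φ x‖ ∂μ) := by
  have hsN1 : 1 ≤ Real.sqrt N := by
    rw [show (1:ℝ) = Real.sqrt 1 by simp]
    exact Real.sqrt_le_sqrt (by exact_mod_cast hN)
  set sN := Real.sqrt N with hsN
  have hsN0 : 0 < sN := by linarith
  refine ⟨(1 + sN ^ d) * sN ^ α * (4 * sN) ^ (d + α) * (2:ℝ) ^ d * (1 - (2:ℝ) ^ (-α))⁻¹, ?_⟩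
  intro μ K b₁ b₂ hμ hK hb₁m hb₁ hb₂m hb₂ cQ lQ A hA hlQ hsep φ hφ hφsupp hmean
  set Q := cube cQ lQ with hQ
  set D := sDist A Q with hD
  have hD0 : 0 < D := lt_of_lt_of_le hlQ hsep
  have hcQ : cQ ∈ Q := center_mem_cube cQ hlQ
  have hDle : ∀ x ∈ A, ∀ y ∈ Q, D ≤ dist x y := by
    intro x hx y hy
    exact csInf_le ⟨0, fun r ⟨a, _, b, _, hr⟩ => hr ▸ dist_nonneg⟩ ⟨x, hx, y, hy, rfl⟩
  have hQdiam : ∀ y ∈ Q, dist y cQ ≤ sN * lQ / 2 := fun y hy =>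
    dist_le_of_mem_cube hlQ.le hy
  have hsl0 : 0 < sN * lQ := by positivity
  -- the kernel difference estimate
  have hker : ∀ x ∈ A, ∀ y ∈ Q,
      ‖K x y - K x cQ‖ ≤ (1 + sN ^ d) * (sN * lQ) ^ α / dist x y ^ (d + α) := by
    intro x hx y hy
    have hxy : D ≤ dist x y := hDle x hx y hy
    have hxy0 : 0 < dist x y := lt_of_lt_of_le hD0 hxy
    have hxc : D ≤ dist x cQ := hDle x hx cQ hcQ
    have hxc0 : 0 < dist x cQ := lt_of_lt_of_le hD0 hxc
    have hycQ : dist y cQ ≤ sN * lQ / 2 := hQdiam y hy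
    have hden0 : 0 < dist x y ^ (d + α) := Real.rpow_pos_of_pos hxy0 _
    have hnum0 : 0 ≤ (sN * lQ) ^ α := Real.rpow_nonneg hsl0.le _
    have hsNd0 : 0 ≤ sN ^ d := Real.rpow_nonneg hsN0.le _
    by_cases hcase : 2 * dist y cQ < dist x y
    · rcases eq_or_lt_of_le (dist_nonneg (x := y) (y := cQ)) with h0 | h0
      · have hy0 : y = cQ := by rw [← dist_le_zero]; linarith
        rw [hy0, sub_self, norm_zero]
        positivity
      · have hsm := hK.smooth y cQ x h0 (by rw [dist_comm y x]; exact hcase)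
        have hle : ‖K x y - K x cQ‖ ≤ dist y cQ ^ α / dist y x ^ (d + α) :=
          le_trans (le_add_of_nonneg_left (norm_nonneg _)) hsm
        rw [dist_comm y x] at hle
        refine hle.trans ?_
        gcongr
        have hd1 : dist y cQ ^ α ≤ (sN * lQ) ^ α :=
          Real.rpow_le_rpow dist_nonneg (by linarith) hα.le
        nlinarith
    · have hxyle : dist x y ≤ sN * lQ := by linarith [not_lt.mp hcase]
      have hb1 : ‖K x y‖ ≤ dist x y ^ (-d) := hK.bound x y (dist_pos.mp hxy0)
      have hb2 : ‖K x cQ‖ ≤ dist x cQ ^ (-d) := hK.bound x cQ (dist_pos.mp hxc0)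
      rw [le_div_iff₀ hden0]
      have hKd : ‖K x y - K x cQ‖ ≤ dist x y ^ (-d) + dist x cQ ^ (-d) :=
        (norm_sub_le _ _).trans (add_le_add hb1 hb2)
      have e1 : dist x y ^ (-d) * dist x y ^ (d + α) = dist x y ^ α := by
        rw [← Real.rpow_add hxy0]; ring_nf
      have t1 : dist x y ^ α ≤ (sN * lQ) ^ α := Real.rpow_le_rpow dist_nonneg hxyle hα.le
      have t2 : dist x cQ ^ (-d) ≤ D ^ (-d) :=
        Real.rpow_le_rpow_of_nonpos hD0 hxc (neg_nonpos.mpr hd0.le)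
      have t3 : dist x y ^ (d + α) ≤ (sN * lQ) ^ (d + α) :=
        Real.rpow_le_rpow dist_nonneg hxyle (by positivity)
      have t4 : D ^ (-d) * (sN * lQ) ^ (d + α) ≤ sN ^ d * (sN * lQ) ^ α := by
        have e2 : (sN * lQ) ^ (d + α) = (sN * lQ) ^ d * (sN * lQ) ^ α :=
          Real.rpow_add hsl0 _ _
        have e3 : D ^ (-d) * (sN * lQ) ^ d = (sN * lQ / D) ^ d := by
          rw [Real.div_rpow hsl0.le hD0.le, Real.rpow_neg hD0.le, div_eq_mul_inv]; ring
        have e4 : (sN * lQ / D) ^ d ≤ sN ^ d := by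
          apply Real.rpow_le_rpow (by positivity) ?_ hd0.le
          rw [div_le_iff₀ hD0]
          nlinarith [hsep]
        calc D ^ (-d) * (sN * lQ) ^ (d + α) = (sN * lQ / D) ^ d * (sN * lQ) ^ α := by
              rw [e2, ← e3]; ring
          _ ≤ sN ^ d * (sN * lQ) ^ α := mul_le_mul_of_nonneg_right e4 hnum0
      calc ‖K x y - K x cQ‖ * dist x y ^ (d + α)
          ≤ (dist x y ^ (-d) + dist x cQ ^ (-d)) * dist x y ^ (d + α) :=
            mul_le_mul_of_nonneg_right hKd hden0.le
        _ = dist x y ^ α + dist x cQ ^ (-d) * dist x y ^ (d + α) := by rw [add_mul, e1]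
        _ ≤ (sN * lQ) ^ α + D ^ (-d) * (sN * lQ) ^ (d + α) :=
            add_le_add t1 (mul_le_mul t2 t3 hden0.le (Real.rpow_nonneg hD0.le _))
        _ ≤ (sN * lQ) ^ α + sN ^ d * (sN * lQ) ^ α := add_le_add_right t4 _
        _ = (1 + sN ^ d) * (sN * lQ) ^ α := by ring
  -- geometric comparison
  have hgeom : ∀ x ∈ A, ∀ y ∈ Q, D + dist x cQ ≤ 4 * sN * dist x y := by
    intro x hx y hy
    have h1 := hDle x hx y hy
    have h2 := dist_triangle x y cQ
    have h3 := hQdiam y hy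
    have h4 : lQ ≤ D := hsep
    nlinarith [dist_nonneg (x := x) (y := y), mul_le_mul_of_nonneg_left h4 hsN0.le,
      mul_le_mul_of_nonneg_left h1 hsN0.le]
  set CC := (1 + sN ^ d) * (sN * lQ) ^ α * (4 * sN) ^ (d + α) with hCC
  have hCC0 : 0 ≤ CC := by positivity
  -- pointwise bound depending on x only
  have hker2 : ∀ x ∈ A, ∀ y ∈ Q,
      ‖K x y - K x cQ‖ ≤ CC * (D + dist x cQ) ^ (-(d + α)) := by
    intro x hx y hy
    refine (hker x hx y hy).trans ?_
    have hxy0 : 0 < dist x y := lt_of_lt_of_le hD0 (hDle x hx y hy)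
    have hDr0 : 0 < D + dist x cQ := by positivity
    have h1 : (D + dist x cQ) ^ (d + α) ≤ (4 * sN) ^ (d + α) * dist x y ^ (d + α) := by
      rw [← Real.mul_rpow (by positivity) dist_nonneg]
      exact Real.rpow_le_rpow hDr0.le (by linarith [hgeom x hx y hy]) (by positivity)
    set P := (1 + sN ^ d) * (sN * lQ) ^ α with hP
    have hP0 : 0 ≤ P := by positivity
    set a := dist x y ^ (d + α) with ha
    set b := (D + dist x cQ) ^ (d + α) with hb
    set c4 := (4 * sN) ^ (d + α) with hc4
    have ha0 : 0 < a := Real.rpow_pos_of_pos hxy0 _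
    have hb0 : 0 < b := Real.rpow_pos_of_pos hDr0 _
    rw [Real.rpow_neg hDr0.le, hCC, div_le_iff₀ ha0]
    have h2 : P * b⁻¹ * b ≤ P * b⁻¹ * (c4 * a) :=
      mul_le_mul_of_nonneg_left h1 (by positivity)
    have h3 : P * b⁻¹ * b = P := by field_simp
    calc P = P * b⁻¹ * b := h3.symm
      _ ≤ P * b⁻¹ * (c4 * a) := h2
      _ = P * c4 * b⁻¹ * a := by ring
  -- integrability of b₁ * φ
  have hb₁φ : Integrable (fun y => b₁ y * φ y) μ := by
    refine Integrable.mono' hφ.norm (hb₁m.aestronglyMeasurable.mul hφ.1) ?_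
    filter_upwards [hb₁] with y hy
    rw [norm_mul]
    exact mul_le_of_le_one_left (norm_nonneg _) hy
  -- part 1 : inner integrability
  have part1 : ∀ x ∈ A, Integrable (fun y => K x y * b₁ y * φ y) μ := by
    intro x hx
    refine Integrable.mono' (hφ.norm.const_mul (D ^ (-d)))
      (((hK.meas.of_uncurry_left).mul hb₁m).aestronglyMeasurable.mul hφ.1) ?_
    filter_upwards [hb₁] with y hy
    by_cases hyQ : y ∈ Q
    · have hxy : D ≤ dist x y := hDle x hx y hyQ
      have hxy0 : 0 < dist x y := lt_of_lt_of_le hD0 hxy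
      have hKb : ‖K x y‖ ≤ D ^ (-d) :=
        (hK.bound x y (dist_pos.mp hxy0)).trans
          (Real.rpow_le_rpow_of_nonpos hD0 hxy (neg_nonpos.mpr hd0.le))
      calc ‖K x y * b₁ y * φ y‖ = ‖K x y‖ * ‖b₁ y‖ * ‖φ y‖ := by rw [norm_mul, norm_mul]
        _ ≤ D ^ (-d) * 1 * ‖φ y‖ := by gcongr
        _ = D ^ (-d) * ‖φ y‖ := by ring
    · simp [hφsupp y hyQ]
  -- the mean-zero rewriting of the inner integral
  have hFsub : ∀ x ∈ A, (∫ y, K x y * b₁ y * φ y ∂μ) =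
      ∫ y, (K x y - K x cQ) * (b₁ y * φ y) ∂μ := by
    intro x hx
    have h2 : Integrable (fun y => K x cQ * (b₁ y * φ y)) μ := hb₁φ.const_mul _
    have heq : (fun y => (K x y - K x cQ) * (b₁ y * φ y)) =
        fun y => K x y * b₁ y * φ y - K x cQ * (b₁ y * φ y) := by
      funext y; ring
    rw [heq, integral_sub (part1 x hx) h2, integral_const_mul, hmean, mul_zero, sub_zero]
  set Iφ := ∫ y, ‖φ y‖ ∂μ with hIφdef
  have hIφ0 : 0 ≤ Iφ := integral_nonneg fun _ => norm_nonneg _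
  set B := fun x : RN N => CC * Iφ * (D + dist x cQ) ^ (-(d + α)) with hB
  have hB0 : ∀ x, 0 ≤ B x := by
    intro x
    simp only [hB]
    exact mul_nonneg (mul_nonneg hCC0 hIφ0) (Real.rpow_nonneg (by positivity) _)
  -- bound on the inner integral
  have hFle : ∀ x ∈ A, ‖∫ y, K x y * b₁ y * φ y ∂μ‖ ≤ B x := by
    intro x hx
    rw [hFsub x hx]
    have hint : Integrable (fun y => (K x y - K x cQ) * (b₁ y * φ y)) μ := by
      have heq : (fun y => (K x y - K x cQ) * (b₁ y * φ y)) =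
          fun y => K x y * b₁ y * φ y - K x cQ * (b₁ y * φ y) := by funext y; ring
      rw [heq]; exact (part1 x hx).sub (hb₁φ.const_mul _)
    have hc0 : 0 ≤ CC * (D + dist x cQ) ^ (-(d + α)) := by
      have := Real.rpow_nonneg (show (0:ℝ) ≤ D + dist x cQ by positivity) (-(d + α))
      positivity
    calc ‖∫ y, (K x y - K x cQ) * (b₁ y * φ y) ∂μ‖
        ≤ ∫ y, ‖(K x y - K x cQ) * (b₁ y * φ y)‖ ∂μ := norm_integral_le_integral_norm _
      _ ≤ ∫ y, CC * (D + dist x cQ) ^ (-(d + α)) * ‖φ y‖ ∂μ := by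
          refine integral_mono_ae hint.norm (hφ.norm.const_mul _) ?_
          filter_upwards [hb₁] with y hy
          by_cases hyQ : y ∈ Q
          · rw [norm_mul, norm_mul]
            calc ‖K x y - K x cQ‖ * (‖b₁ y‖ * ‖φ y‖)
                ≤ (CC * (D + dist x cQ) ^ (-(d + α))) * (1 * ‖φ y‖) :=
                  mul_le_mul (hker2 x hx y hyQ)
                    (mul_le_mul_of_nonneg_right hy (norm_nonneg _)) (by positivity) hc0
              _ = CC * (D + dist x cQ) ^ (-(d + α)) * ‖φ y‖ := by ring
          · simp [hφsupp y hyQ]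
      _ = B x := by rw [integral_const_mul, hB]; ring
  -- integrability of B
  have hm : Measurable fun x : RN N => (D + dist x cQ) ^ (-(d + α)) := by
    have hc : Continuous fun x : RN N => D + dist x cQ :=
      continuous_const.add (continuous_id.dist continuous_const)
    exact (hc.rpow_const fun x => Or.inl (by positivity)).measurable
  have hBint : Integrable B μ := by
    have hfi : Integrable (fun x => (D + dist x cQ) ^ (-(d + α))) μ := by
      constructor
      · exact hm.aestronglyMeasurable
      · rw [hasFiniteIntegral_iff_ofReal
          (Filter.Eventually.of_forall fun x => Real.rpow_nonneg (by positivity) _)]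
        exact lt_of_le_of_lt (tail_lintegral hμ hd0 hα hD0 cQ) ENNReal.ofReal_lt_top
    exact hfi.const_mul (CC * Iφ)
  -- measurability of the inner integral as a function of x
  haveI : IsFiniteMeasureOnCompacts μ := by
    constructor
    intro s hs
    obtain ⟨R, hR⟩ := hs.isBounded.subset_ball 0
    calc μ s ≤ μ (Metric.ball 0 (max R 1)) :=
          measure_mono (hR.trans (Metric.ball_subset_ball (le_max_left _ _)))
      _ ≤ ENNReal.ofReal ((max R 1) ^ d) := hμ 0 _ (lt_of_lt_of_le one_pos (le_max_right _ _))
      _ < ⊤ := ENNReal.ofReal_lt_top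
  haveI : SigmaFinite μ := inferInstance
  have hFsm : StronglyMeasurable (fun x => ∫ y, K x y * b₁ y * φ y ∂μ) := by
    obtain ⟨ψ, hψm, hψae⟩ := hφ.1
    have hGm : StronglyMeasurable (fun x => ∫ y, K x y * b₁ y * ψ y ∂μ) := by
      exact StronglyMeasurable.integral_prod_right'
        (f := fun p : RN N × RN N => K p.1 p.2 * b₁ p.2 * ψ p.2)
        ((hK.meas.mul (hb₁m.comp measurable_snd)).stronglyMeasurable.mul
          (hψm.comp_measurable measurable_snd))
    have heq : (fun x => ∫ y, K x y * b₁ y * φ y ∂μ) =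
        fun x => ∫ y, K x y * b₁ y * ψ y ∂μ := by
      funext x
      apply integral_congr_ae
      filter_upwards [hψae] with y hy
      rw [hy]
    rw [heq]; exact hGm
  have part2 : IntegrableOn (fun x => b₂ x * ∫ y, K x y * b₁ y * φ y ∂μ) A μ := by
    refine Integrable.mono' (hBint.restrict)
      ((hb₂m.aestronglyMeasurable.mul hFsm.aestronglyMeasurable).restrict) ?_
    filter_upwards [ae_restrict_mem hA, ae_restrict_of_ae hb₂] with x hxA hx2
    calc ‖b₂ x * ∫ y, K x y * b₁ y * φ y ∂μ‖
        = ‖b₂ x‖ * ‖∫ y, K x y * b₁ y * φ y ∂μ‖ := norm_mul _ _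
      _ ≤ 1 * B x := mul_le_mul hx2 (hFle x hxA) (norm_nonneg _) zero_le_one
      _ = B x := one_mul _
  refine ⟨part1, part2, ?_⟩
  have h2α : (2:ℝ) ^ (-α) < 1 := Real.rpow_lt_one_of_one_lt_of_neg one_lt_two (by linarith)
  have hRHS0 : (0:ℝ) ≤ (2:ℝ) ^ d * (1 - (2:ℝ) ^ (-α))⁻¹ * D ^ (-α) :=
    mul_nonneg (mul_nonneg (Real.rpow_nonneg (by norm_num) _)
      (inv_nonneg.mpr (by linarith))) (Real.rpow_nonneg hD0.le _)
  have haeB : ∀ᵐ x ∂(μ.restrict A), ‖b₂ x * ∫ y, K x y * b₁ y * φ y ∂μ‖ ≤ B x := by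
    filter_upwards [ae_restrict_mem hA, ae_restrict_of_ae hb₂] with x hxA hx2
    calc ‖b₂ x * ∫ y, K x y * b₁ y * φ y ∂μ‖
        = ‖b₂ x‖ * ‖∫ y, K x y * b₁ y * φ y ∂μ‖ := norm_mul _ _
      _ ≤ 1 * B x := mul_le_mul hx2 (hFle x hxA) (norm_nonneg _) zero_le_one
      _ = B x := one_mul _
  have hfle : ∫ x, (D + dist x cQ) ^ (-(d + α)) ∂μ ≤
      (2:ℝ) ^ d * (1 - (2:ℝ) ^ (-α))⁻¹ * D ^ (-α) := by
    rw [integral_eq_lintegral_of_nonneg_ae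
      (Filter.Eventually.of_forall fun x => Real.rpow_nonneg (by positivity) _)
      hm.aestronglyMeasurable]
    exact ENNReal.toReal_le_of_le_ofReal hRHS0 (tail_lintegral hμ hd0 hα hD0 cQ)
  calc ‖∫ x in A, b₂ x * ∫ y, K x y * b₁ y * φ y ∂μ ∂μ‖
      ≤ ∫ x in A, ‖b₂ x * ∫ y, K x y * b₁ y * φ y ∂μ‖ ∂μ := norm_integral_le_integral_norm _
    _ ≤ ∫ x in A, B x ∂μ := integral_mono_ae part2.norm (hBint.restrict) haeB
    _ ≤ ∫ x, B x ∂μ := setIntegral_le_integral hBint (Filter.Eventually.of_forall hB0)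
    _ = (CC * Iφ) * ∫ x, (D + dist x cQ) ^ (-(d + α)) ∂μ := integral_const_mul _ _
    _ ≤ (CC * Iφ) * ((2:ℝ) ^ d * (1 - (2:ℝ) ^ (-α))⁻¹ * D ^ (-α)) :=
        mul_le_mul_of_nonneg_left hfle (mul_nonneg hCC0 hIφ0)
    _ = (1 + sN ^ d) * sN ^ α * (4 * sN) ^ (d + α) * (2:ℝ) ^ d *
          (1 - (2:ℝ) ^ (-α))⁻¹ * (lQ / D) ^ α * Iφ := by
        rw [hCC]
        have e1 : (sN * lQ) ^ α = sN ^ α * lQ ^ α := Real.mul_rpow hsN0.le hlQ.le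
        have e2 : (lQ / D) ^ α = lQ ^ α * D ^ (-α) := by
          rw [Real.div_rpow hlQ.le hD0.le, Real.rpow_neg hD0.le, div_eq_mul_inv]
        rw [e1, e2]; ring
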